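/- Let σ : ℝ → ℝ be twice continuously differentiable with σ, σ' and σ'' bounded, and let Ψ : ℝ^{n*} → L²([0,1]ⁿ) with n* = N(n+2) be the shallow neural network operator with derivative DΨ[p]. Then for every bounded convex set U ⊆ ℝ^{n*} there exist constants C_I, C_L > 0 such that for all p, q ∈ U: ‖DΨ[p]‖ ≤ C_I and ‖DΨ[p] − DΨ[q]‖ ≤ C_L ‖p − q‖, where ‖·‖ denotes the operator norm of continuous linear maps from ℝ^{n*} to L²([0,1]ⁿ). -/

import Mathlib

open MeasureTheory

section
variable {n N : ℕ} {σ : ℝ → ℝ} {M R : ℝ}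

lemma lipOfDerivBound {f : ℝ → ℝ} {M : ℝ} (hf : Differentiable ℝ f)
    (hM : ∀ t, |deriv f t| ≤ M) (a b : ℝ) : |f a - f b| ≤ M * |a - b| := by
  have := Convex.norm_image_sub_le_of_norm_deriv_le (f := f) (C := M) (s := Set.univ)
    (fun x _ => (hf x))
    (fun x _ => by simpa [Real.norm_eq_abs] using hM x) convex_univ
    (Set.mem_univ b) (Set.mem_univ a)
  simpa [Real.norm_eq_abs] using this

lemma sigmaSecond (hσ : ContDiff ℝ 2 σ)
    (hM : ∀ t, |deriv (deriv σ) t| ≤ M) (u v δ : ℝ) :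
    |σ (u + δ) - σ u - (σ (v + δ) - σ v)| ≤ M * |u - v| * |δ| := by
  have hd1 : Differentiable ℝ σ := hσ.differentiable two_ne_zero
  have hd2 : Differentiable ℝ (deriv σ) := by
    have h := (contDiff_succ_iff_deriv (n := 1)).mp (by norm_num at hσ ⊢; exact hσ)
    exact h.2.2.differentiable one_ne_zero
  have key : ∀ s : ℝ, HasDerivAt (fun s => σ (u + s) - σ (v + s))
      (deriv σ (u + s) - deriv σ (v + s)) s := by
    intro s
    have h1 : HasDerivAt (fun s => σ (u + s)) (deriv σ (u + s) * 1) s :=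
      (hd1 (u + s)).hasDerivAt.comp s ((hasDerivAt_id s).const_add u)
    have h2 : HasDerivAt (fun s => σ (v + s)) (deriv σ (v + s) * 1) s :=
      (hd1 (v + s)).hasDerivAt.comp s ((hasDerivAt_id s).const_add v)
    have h3 := h1.sub h2
    simp only [mul_one] at h3
    exact h3
  have bnd : ∀ s : ℝ, |deriv σ (u + s) - deriv σ (v + s)| ≤ M * |u - v| := by
    intro s
    have := lipOfDerivBound hd2 hM (u + s) (v + s)
    simpa using this
  have := Convex.norm_image_sub_le_of_norm_deriv_le
    (f := fun s => σ (u + s) - σ (v + s)) (C := M * |u - v|) (s := Set.univ)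
    (fun s _ => (key s).differentiableAt)
    (fun s _ => by
      rw [Real.norm_eq_abs]
      have : deriv (fun s => σ (u + s) - σ (v + s)) s
          = deriv σ (u + s) - deriv σ (v + s) := (key s).deriv
      rw [this]; exact bnd s) convex_univ (Set.mem_univ 0) (Set.mem_univ δ)
  have e : σ (u + δ) - σ (v + δ) - (σ (u + 0) - σ (v + 0))
      = σ (u + δ) - σ u - (σ (v + δ) - σ v) := by ring_nf
  rw [Real.norm_eq_abs, Real.norm_eq_abs, e, sub_zero] at this
  exact this

abbrev Pm (n N : ℕ) := (Fin N → ℝ) × (Fin N → Fin n → ℝ) × (Fin N → ℝ)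

lemma comp1 (p : Pm n N) (j : Fin N) : |p.1 j| ≤ ‖p‖ := by
  calc |p.1 j| ≤ ‖p.1‖ := by simpa [Real.norm_eq_abs] using norm_le_pi_norm p.1 j
  _ ≤ ‖p‖ := norm_fst_le p

lemma comp21 (p : Pm n N) (j : Fin N) (i : Fin n) : |p.2.1 j i| ≤ ‖p‖ := by
  calc |p.2.1 j i| ≤ ‖p.2.1 j‖ := by simpa [Real.norm_eq_abs] using norm_le_pi_norm (p.2.1 j) i
  _ ≤ ‖p.2.1‖ := norm_le_pi_norm p.2.1 j
  _ ≤ ‖p.2‖ := norm_fst_le p.2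
  _ ≤ ‖p‖ := norm_snd_le p

lemma comp22 (p : Pm n N) (j : Fin N) : |p.2.2 j| ≤ ‖p‖ := by
  calc |p.2.2 j| ≤ ‖p.2.2‖ := by simpa [Real.norm_eq_abs] using norm_le_pi_norm p.2.2 j
  _ ≤ ‖p.2‖ := norm_snd_le p.2
  _ ≤ ‖p‖ := norm_snd_le p

lemma affBound {c : Fin n → ℝ} {d K : ℝ} {x : Fin n → ℝ}
    (hx : x ∈ Set.Icc 0 1) (hc : ∀ i, |c i| ≤ K) (hd : |d| ≤ K) :
    |(∑ i, c i * x i) + d| ≤ (n + 1) * K := by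
  have hK : 0 ≤ K := (abs_nonneg d).trans hd
  have h1 : |∑ i, c i * x i| ≤ n * K := by
    refine (Finset.abs_sum_le_sum_abs _ _).trans ?_
    have hb : ∀ i ∈ Finset.univ, |c i * x i| ≤ K := by
      intro i _
      rw [abs_mul]
      have h0 : (0:ℝ) ≤ x i := hx.1 i
      have h1 : x i ≤ 1 := hx.2 i
      have hxi : |x i| ≤ 1 := abs_le.mpr ⟨by linarith, h1⟩
      calc |c i| * |x i| ≤ K * 1 := mul_le_mul (hc i) hxi (abs_nonneg _) hK
      _ = K := mul_one K
    calc ∑ i, |c i * x i| ≤ ∑ _i : Fin n, K := Finset.sum_le_sum hb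
    _ = n * K := by simp [mul_comm]
  calc |(∑ i, c i * x i) + d| ≤ |∑ i, c i * x i| + |d| := abs_add_le _ _
  _ ≤ n * K + K := add_le_add h1 hd
  _ = (n + 1) * K := by ring

lemma zshift (p k : Pm n N) (j : Fin N) (x : Fin n → ℝ) :
    (∑ i, (p + k).2.1 j i * x i) + (p + k).2.2 j
      = ((∑ i, p.2.1 j i * x i) + p.2.2 j) + ((∑ i, k.2.1 j i * x i) + k.2.2 j) := by
  have : ∀ i, (p + k).2.1 j i * x i = p.2.1 j i * x i + k.2.1 j i * x i := by
    intro i; show (p.2.1 j i + k.2.1 j i) * x i = _; ring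
  rw [Finset.sum_congr rfl (fun i _ => this i), Finset.sum_add_distrib]
  show _ + (p.2.2 j + k.2.2 j) = _
  ring

lemma keyA (hσ : ContDiff ℝ 2 σ)
    (hb : ∀ t, |σ t| ≤ M ∧ |deriv σ t| ≤ M ∧ |deriv (deriv σ) t| ≤ M)
    {x : Fin n → ℝ} (hx : x ∈ Set.Icc 0 1) (p k : Pm n N) (hp : ‖p‖ ≤ R) :
    |(∑ j, (p + k).1 j * σ ((∑ i, (p + k).2.1 j i * x i) + (p + k).2.2 j))
      - ∑ j, p.1 j * σ ((∑ i, p.2.1 j i * x i) + p.2.2 j)|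
      ≤ (N * (M + R * (M * (n + 1)))) * ‖k‖ := by
  have hM : 0 ≤ M := (abs_nonneg _).trans (hb 0).1
  have hR : 0 ≤ R := (norm_nonneg p).trans hp
  have hd1 : Differentiable ℝ σ := hσ.differentiable two_ne_zero
  rw [← Finset.sum_sub_distrib]
  refine (Finset.abs_sum_le_sum_abs _ _).trans ?_
  have hterm : ∀ j ∈ Finset.univ,
      |(p + k).1 j * σ ((∑ i, (p + k).2.1 j i * x i) + (p + k).2.2 j)
        - p.1 j * σ ((∑ i, p.2.1 j i * x i) + p.2.2 j)|
      ≤ (M + R * (M * (n + 1))) * ‖k‖ := by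
    intro j _
    set u := (∑ i, p.2.1 j i * x i) + p.2.2 j with hu
    set δ := (∑ i, k.2.1 j i * x i) + k.2.2 j with hδdef
    have ez : (∑ i, (p + k).2.1 j i * x i) + (p + k).2.2 j = u + δ := zshift p k j x
    have eα : (p + k).1 j = p.1 j + k.1 j := rfl
    rw [ez, eα]
    have alg : (p.1 j + k.1 j) * σ (u + δ) - p.1 j * σ u
        = k.1 j * σ (u + δ) + p.1 j * (σ (u + δ) - σ u) := by ring
    rw [alg]
    have hδb : |δ| ≤ (n + 1) * ‖k‖ := affBound hx (comp21 k j) (comp22 k j)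
    have hlip : |σ (u + δ) - σ u| ≤ M * |δ| := by
      have := lipOfDerivBound hd1 (fun t => (hb t).2.1) (u + δ) u
      simpa using this
    calc |k.1 j * σ (u + δ) + p.1 j * (σ (u + δ) - σ u)|
        ≤ |k.1 j * σ (u + δ)| + |p.1 j * (σ (u + δ) - σ u)| := abs_add_le _ _
      _ = |k.1 j| * |σ (u + δ)| + |p.1 j| * |σ (u + δ) - σ u| := by rw [abs_mul, abs_mul]
      _ ≤ ‖k‖ * M + R * (M * ((n + 1) * ‖k‖)) := by
          refine add_le_add (mul_le_mul (comp1 k j) (hb _).1 (abs_nonneg _) (norm_nonneg _)) ?_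
          refine mul_le_mul ((comp1 p j).trans hp)
            (hlip.trans (mul_le_mul_of_nonneg_left hδb hM)) (abs_nonneg _) hR
      _ = (M + R * (M * (n + 1))) * ‖k‖ := by ring
  calc ∑ j, |(p + k).1 j * σ ((∑ i, (p + k).2.1 j i * x i) + (p + k).2.2 j)
        - p.1 j * σ ((∑ i, p.2.1 j i * x i) + p.2.2 j)|
      ≤ ∑ _j : Fin N, (M + R * (M * (n + 1))) * ‖k‖ := Finset.sum_le_sum hterm
    _ = (N * (M + R * (M * (n + 1)))) * ‖k‖ := by
        simp [Finset.sum_const]; ring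

lemma keyB (hσ : ContDiff ℝ 2 σ)
    (hb : ∀ t, |σ t| ≤ M ∧ |deriv σ t| ≤ M ∧ |deriv (deriv σ) t| ≤ M)
    {x : Fin n → ℝ} (hx : x ∈ Set.Icc 0 1) (p q k : Pm n N) (hq : ‖q‖ ≤ R)
    (hR : 0 ≤ R) :
    |((∑ j, (p + k).1 j * σ ((∑ i, (p + k).2.1 j i * x i) + (p + k).2.2 j))
      - ∑ j, p.1 j * σ ((∑ i, p.2.1 j i * x i) + p.2.2 j))
      - ((∑ j, (q + k).1 j * σ ((∑ i, (q + k).2.1 j i * x i) + (q + k).2.2 j))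
      - ∑ j, q.1 j * σ ((∑ i, q.2.1 j i * x i) + q.2.2 j))|
      ≤ (N * (M * (n + 1) * (2 + R * (n + 1)))) * (‖p - q‖ * ‖k‖) := by
  have hM : 0 ≤ M := (abs_nonneg _).trans (hb 0).1
  have hd1 : Differentiable ℝ σ := hσ.differentiable two_ne_zero
  rw [← Finset.sum_sub_distrib, ← Finset.sum_sub_distrib, ← Finset.sum_sub_distrib]
  refine (Finset.abs_sum_le_sum_abs _ _).trans ?_
  have hterm : ∀ j ∈ Finset.univ,
      |((p + k).1 j * σ ((∑ i, (p + k).2.1 j i * x i) + (p + k).2.2 j)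
        - p.1 j * σ ((∑ i, p.2.1 j i * x i) + p.2.2 j))
        - ((q + k).1 j * σ ((∑ i, (q + k).2.1 j i * x i) + (q + k).2.2 j)
        - q.1 j * σ ((∑ i, q.2.1 j i * x i) + q.2.2 j))|
      ≤ (M * (n + 1) * (2 + R * (n + 1))) * (‖p - q‖ * ‖k‖) := by
    intro j _
    set u := (∑ i, p.2.1 j i * x i) + p.2.2 j with hu
    set v := (∑ i, q.2.1 j i * x i) + q.2.2 j with hv
    set δ := (∑ i, k.2.1 j i * x i) + k.2.2 j with hδdef
    have ezp : (∑ i, (p + k).2.1 j i * x i) + (p + k).2.2 j = u + δ := zshift p k j x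
    have ezq : (∑ i, (q + k).2.1 j i * x i) + (q + k).2.2 j = v + δ := zshift q k j x
    have eαp : (p + k).1 j = p.1 j + k.1 j := rfl
    have eαq : (q + k).1 j = q.1 j + k.1 j := rfl
    rw [ezp, ezq, eαp, eαq]
    have alg : (p.1 j + k.1 j) * σ (u + δ) - p.1 j * σ u
        - ((q.1 j + k.1 j) * σ (v + δ) - q.1 j * σ v)
        = k.1 j * (σ (u + δ) - σ (v + δ)) + (p.1 j - q.1 j) * (σ (u + δ) - σ u)
          + q.1 j * (σ (u + δ) - σ u - (σ (v + δ) - σ v)) := by ring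
    rw [alg]
    have hδb : |δ| ≤ (n + 1) * ‖k‖ := affBound hx (comp21 k j) (comp22 k j)
    have huv : |u - v| ≤ (n + 1) * ‖p - q‖ := by
      have e : u - v = (∑ i, (p - q).2.1 j i * x i) + (p - q).2.2 j := by
        have h1 : ∀ i, (p - q).2.1 j i * x i = p.2.1 j i * x i - q.2.1 j i * x i := by
          intro i; show (p.2.1 j i - q.2.1 j i) * x i = _; ring
        rw [Finset.sum_congr rfl (fun i _ => h1 i), Finset.sum_sub_distrib]
        show u - v = ((∑ i, p.2.1 j i * x i) - ∑ i, q.2.1 j i * x i) + (p.2.2 j - q.2.2 j)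
        rw [hu, hv]; ring
      rw [e]; exact affBound hx (comp21 (p - q) j) (comp22 (p - q) j)
    have hlip1 : |σ (u + δ) - σ (v + δ)| ≤ M * |u - v| := by
      have := lipOfDerivBound hd1 (fun t => (hb t).2.1) (u + δ) (v + δ)
      simpa using this
    have hlip2 : |σ (u + δ) - σ u| ≤ M * |δ| := by
      have := lipOfDerivBound hd1 (fun t => (hb t).2.1) (u + δ) u
      simpa using this
    have hsec : |σ (u + δ) - σ u - (σ (v + δ) - σ v)| ≤ M * |u - v| * |δ| :=
      sigmaSecond hσ (fun t => (hb t).2.2) u v δ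
    have t1 : |k.1 j * (σ (u + δ) - σ (v + δ))| ≤ ‖k‖ * (M * ((n + 1) * ‖p - q‖)) := by
      rw [abs_mul]
      exact mul_le_mul (comp1 k j)
        (hlip1.trans (mul_le_mul_of_nonneg_left huv hM)) (abs_nonneg _) (norm_nonneg _)
    have t2 : |(p.1 j - q.1 j) * (σ (u + δ) - σ u)| ≤ ‖p - q‖ * (M * ((n + 1) * ‖k‖)) := by
      rw [abs_mul]
      have h1 : |p.1 j - q.1 j| ≤ ‖p - q‖ := by
        have := comp1 (p - q) j
        simpa using this
      exact mul_le_mul h1 (hlip2.trans (mul_le_mul_of_nonneg_left hδb hM))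
        (abs_nonneg _) (norm_nonneg _)
    have t3 : |q.1 j * (σ (u + δ) - σ u - (σ (v + δ) - σ v))|
        ≤ R * (M * ((n + 1) * ‖p - q‖) * ((n + 1) * ‖k‖)) := by
      rw [abs_mul]
      refine mul_le_mul ((comp1 q j).trans hq) ?_ (abs_nonneg _) hR
      refine hsec.trans ?_
      have h1 : M * |u - v| ≤ M * ((n + 1) * ‖p - q‖) := mul_le_mul_of_nonneg_left huv hM
      refine mul_le_mul h1 hδb (abs_nonneg _) ?_
      have : (0:ℝ) ≤ (n + 1) * ‖p - q‖ := by positivity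
      exact mul_nonneg hM this
    calc |k.1 j * (σ (u + δ) - σ (v + δ)) + (p.1 j - q.1 j) * (σ (u + δ) - σ u)
          + q.1 j * (σ (u + δ) - σ u - (σ (v + δ) - σ v))|
        ≤ |k.1 j * (σ (u + δ) - σ (v + δ)) + (p.1 j - q.1 j) * (σ (u + δ) - σ u)|
          + |q.1 j * (σ (u + δ) - σ u - (σ (v + δ) - σ v))| := abs_add_le _ _
      _ ≤ |k.1 j * (σ (u + δ) - σ (v + δ))| + |(p.1 j - q.1 j) * (σ (u + δ) - σ u)|
          + |q.1 j * (σ (u + δ) - σ u - (σ (v + δ) - σ v))| :=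
            add_le_add_left (abs_add_le _ _) _
      _ ≤ ‖k‖ * (M * ((n + 1) * ‖p - q‖)) + ‖p - q‖ * (M * ((n + 1) * ‖k‖))
          + R * (M * ((n + 1) * ‖p - q‖) * ((n + 1) * ‖k‖)) :=
            add_le_add (add_le_add t1 t2) t3
      _ = (M * (n + 1) * (2 + R * (n + 1))) * (‖p - q‖ * ‖k‖) := by ring
  calc (∑ j, |((p + k).1 j * σ ((∑ i, (p + k).2.1 j i * x i) + (p + k).2.2 j)
        - p.1 j * σ ((∑ i, p.2.1 j i * x i) + p.2.2 j))
        - ((q + k).1 j * σ ((∑ i, (q + k).2.1 j i * x i) + (q + k).2.2 j)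
        - q.1 j * σ ((∑ i, q.2.1 j i * x i) + q.2.2 j))|)
      ≤ ∑ _j : Fin N, (M * (n + 1) * (2 + R * (n + 1))) * (‖p - q‖ * ‖k‖) :=
        Finset.sum_le_sum hterm
    _ = (N * (M * (n + 1) * (2 + R * (n + 1)))) * (‖p - q‖ * ‖k‖) := by
        simp [Finset.sum_const]; ring

end


lemma opnorm_le_of_diff_bound {E F : Type*} [NormedAddCommGroup E] [NormedSpace ℝ E]
    [NormedAddCommGroup F] [NormedSpace ℝ F]
    (Φ : E → F) (L : E →L[ℝ] F) (p : E) (hL : HasFDerivAt Φ L p) (C : ℝ) (hC : 0 ≤ C)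
    (hbd : ∀ k : E, ‖Φ (p + k) - Φ p‖ ≤ C * ‖k‖) : ‖L‖ ≤ C := by
  refine ContinuousLinearMap.opNorm_le_bound _ hC (fun h => ?_)
  rcases eq_or_ne h 0 with rfl | hh
  · simp
  have hn : 0 < ‖h‖ := norm_pos_iff.mpr hh
  refine le_of_forall_pos_le_add (fun ε hε => ?_)
  set c := ε / ‖h‖ with hc
  have hcpos : 0 < c := by positivity
  have e1 := (hasFDerivAt_iff_isLittleO_nhds_zero.mp hL).def hcpos
  rw [Metric.eventually_nhds_iff] at e1
  obtain ⟨δ1, hδ1, H1⟩ := e1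
  set t := δ1 / (2 * (‖h‖ + 1)) with htdef
  have ht : 0 < t := by positivity
  have hkn : ‖t • h‖ = t * ‖h‖ := by rw [norm_smul, Real.norm_eq_abs, abs_of_pos ht]
  have hdist : dist (t • h) 0 < δ1 := by
    rw [dist_zero_right, hkn]
    have h1 : t * ‖h‖ < t * (‖h‖ + 1) := by nlinarith
    have hne : ‖h‖ + 1 ≠ 0 := by positivity
    have h2 : t * (‖h‖ + 1) = δ1 / 2 := by rw [htdef]; field_simp
    linarith
  have hb1 := H1 hdist
  have hkey : ‖L (t • h)‖ ≤ ‖Φ (p + t • h) - Φ p‖ + ‖Φ (p + t • h) - Φ p - L (t • h)‖ := by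
    have e : L (t • h) = (Φ (p + t • h) - Φ p) - (Φ (p + t • h) - Φ p - L (t • h)) := by abel
    conv_lhs => rw [e]
    exact norm_sub_le _ _
  have e3 : ‖L (t • h)‖ = t * ‖L h‖ := by
    rw [_root_.map_smul, norm_smul, Real.norm_eq_abs, abs_of_pos ht]
  have hce : c * ‖h‖ = ε := by rw [hc]; field_simp
  have hfin : t * ‖L h‖ ≤ t * (C * ‖h‖ + ε) := by
    rw [← e3]
    refine hkey.trans ?_
    rw [hkn] at hb1
    have := hbd (t • h)
    rw [hkn] at this
    nlinarith [this, hb1]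
  exact le_of_mul_le_mul_left (by linarith) ht

lemma opnorm_sub_le_of_diff_bound {E F : Type*} [NormedAddCommGroup E] [NormedSpace ℝ E]
    [NormedAddCommGroup F] [NormedSpace ℝ F]
    (Φ : E → F) (L L' : E →L[ℝ] F) (p q : E) (hL : HasFDerivAt Φ L p)
    (hL' : HasFDerivAt Φ L' q) (C : ℝ) (hC : 0 ≤ C)
    (hbd : ∀ k : E, ‖(Φ (p + k) - Φ p) - (Φ (q + k) - Φ q)‖ ≤ C * ‖k‖) : ‖L - L'‖ ≤ C := by
  refine ContinuousLinearMap.opNorm_le_bound _ hC (fun h => ?_)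
  rcases eq_or_ne h 0 with rfl | hh
  · simp
  have hn : 0 < ‖h‖ := norm_pos_iff.mpr hh
  refine le_of_forall_pos_le_add (fun ε hε => ?_)
  set c := ε / (2 * ‖h‖) with hc
  have hcpos : 0 < c := by positivity
  have e1 := (hasFDerivAt_iff_isLittleO_nhds_zero.mp hL).def hcpos
  have e2 := (hasFDerivAt_iff_isLittleO_nhds_zero.mp hL').def hcpos
  rw [Metric.eventually_nhds_iff] at e1 e2
  obtain ⟨δ1, hδ1, H1⟩ := e1
  obtain ⟨δ2, hδ2, H2⟩ := e2
  have hmin : 0 < min δ1 δ2 := lt_min hδ1 hδ2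
  set t := min δ1 δ2 / (2 * (‖h‖ + 1)) with htdef
  have ht : 0 < t := by positivity
  have hkn : ‖t • h‖ = t * ‖h‖ := by rw [norm_smul, Real.norm_eq_abs, abs_of_pos ht]
  have hdist : ∀ δ' : ℝ, min δ1 δ2 ≤ δ' → dist (t • h) 0 < δ' := by
    intro δ' hδ'
    rw [dist_zero_right, hkn]
    have h1 : t * ‖h‖ < t * (‖h‖ + 1) := by nlinarith
    have hne : ‖h‖ + 1 ≠ 0 := by positivity
    have h2 : t * (‖h‖ + 1) = min δ1 δ2 / 2 := by rw [htdef]; field_simp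
    linarith
  have hb1 := H1 (hdist δ1 (min_le_left _ _))
  have hb2 := H2 (hdist δ2 (min_le_right _ _))
  have hkey : ‖L (t • h) - L' (t • h)‖
      ≤ ‖(Φ (p + t • h) - Φ p) - (Φ (q + t • h) - Φ q)‖
        + ‖Φ (p + t • h) - Φ p - L (t • h)‖ + ‖Φ (q + t • h) - Φ q - L' (t • h)‖ := by
    have e : L (t • h) - L' (t • h)
        = (((Φ (p + t • h) - Φ p) - (Φ (q + t • h) - Φ q))
          - (Φ (p + t • h) - Φ p - L (t • h))) + (Φ (q + t • h) - Φ q - L' (t • h)) := by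
      abel
    conv_lhs => rw [e]
    exact (norm_add_le _ _).trans (add_le_add_left (norm_sub_le _ _) _)
  have e3 : ‖(L - L') (t • h)‖ = t * ‖(L - L') h‖ := by
    rw [_root_.map_smul, norm_smul, Real.norm_eq_abs, abs_of_pos ht]
  have e4 : ‖(L - L') (t • h)‖ = ‖L (t • h) - L' (t • h)‖ := by
    simp [ContinuousLinearMap.sub_apply, smul_sub]
  have hce : c * ‖h‖ = ε / 2 := by rw [hc]; field_simp
  have hfin : t * ‖(L - L') h‖ ≤ t * (C * ‖h‖ + ε) := by
    rw [← e3, e4]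
    refine hkey.trans ?_
    rw [hkn] at hb1 hb2
    have := hbd (t • h)
    rw [hkn] at this
    nlinarith [this, hb1, hb2]
  exact le_of_mul_le_mul_left (by linarith) ht


open MeasureTheory in
/-- on every bounded convex set `U` of parameters, the derivative
`DΨ[p]` of the shallow neural network operator is uniformly bounded and Lipschitz
continuous in `p` (in operator norm). -/
theorem stmt13 {n N : ℕ}
    (σ : ℝ → ℝ) (hσ : ContDiff ℝ 2 σ)
    (hσb : ∃ M : ℝ, ∀ t : ℝ, |σ t| ≤ M ∧ |deriv σ t| ≤ M ∧ |deriv (deriv σ) t| ≤ M)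
    (μ : Measure (Fin n → ℝ)) (hμ : μ = volume.restrict (Set.Icc 0 1))
    (Ψ : (Fin N → ℝ) × (Fin N → Fin n → ℝ) × (Fin N → ℝ) → Lp ℝ 2 μ)
    (hΨ : ∀ (α : Fin N → ℝ) (w : Fin N → Fin n → ℝ) (θ : Fin N → ℝ),
      (Ψ (α, w, θ) : (Fin n → ℝ) → ℝ)
        =ᵐ[μ] fun x => ∑ j, α j * σ ((∑ i, w j i * x i) + θ j))
    (DΨ : (Fin N → ℝ) × (Fin N → Fin n → ℝ) × (Fin N → ℝ) →
      ((Fin N → ℝ) × (Fin N → Fin n → ℝ) × (Fin N → ℝ)) →L[ℝ] Lp ℝ 2 μ)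
    (hD : ∀ p, HasFDerivAt Ψ (DΨ p) p) :
    ∀ U : Set ((Fin N → ℝ) × (Fin N → Fin n → ℝ) × (Fin N → ℝ)),
      Bornology.IsBounded U → Convex ℝ U →
      ∃ C_I C_L : ℝ, 0 < C_I ∧ 0 < C_L ∧
        ∀ p ∈ U, ∀ q ∈ U, ‖DΨ p‖ ≤ C_I ∧ ‖DΨ p - DΨ q‖ ≤ C_L * ‖p - q‖ := by
  intro U hUb _hUc
  obtain ⟨M, hb⟩ := hσb
  have hM : 0 ≤ M := (abs_nonneg _).trans (hb 0).1
  obtain ⟨R₀, hR₀⟩ := hUb.subset_closedBall (0 : Pm n N)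
  set R := max R₀ 0 with hRdef
  have hR : 0 ≤ R := le_max_right _ _
  have hmem : ∀ p ∈ U, ‖p‖ ≤ R := fun p hp =>
    (mem_closedBall_zero_iff.mp (hR₀ hp)).trans (le_max_left _ _)
  have huniv : μ Set.univ = 1 := by
    rw [hμ, Measure.restrict_apply_univ, Real.volume_Icc_pi]
    simp
  haveI : IsFiniteMeasure μ := ⟨by rw [huniv]; exact ENNReal.one_lt_top⟩
  have hmuv : measureUnivNNReal μ = 1 := by
    simp [measureUnivNNReal, huniv]
  have normle : ∀ (f : Lp ℝ 2 μ) (C : ℝ), 0 ≤ C → (∀ᵐ x ∂μ, |f x| ≤ C) → ‖f‖ ≤ C := by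
    intro f C hC hbd
    have := MeasureTheory.Lp.norm_le_of_ae_bound (f := f) hC
      (by simpa [Real.norm_eq_abs] using hbd)
    rw [hmuv] at this
    simpa using this
  have hΨ' : ∀ p : Pm n N,
      ⇑(Ψ p) =ᵐ[μ] fun x => ∑ j, p.1 j * σ ((∑ i, p.2.1 j i * x i) + p.2.2 j) :=
    fun p => hΨ p.1 p.2.1 p.2.2
  have aeIcc : ∀ᵐ x ∂μ, x ∈ Set.Icc (0 : Fin n → ℝ) 1 := by
    rw [hμ]; exact ae_restrict_mem measurableSet_Icc
  set C1 := (N : ℝ) * (M + R * (M * (n + 1))) with hC1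
  set C2 := (N : ℝ) * (M * (n + 1) * (2 + R * (n + 1))) with hC2
  have hC1n : 0 ≤ C1 := by
    refine mul_nonneg (Nat.cast_nonneg _) ?_
    have h1 : (0:ℝ) ≤ M * (n + 1) := mul_nonneg hM (by positivity)
    exact add_nonneg hM (mul_nonneg hR h1)
  have hC2n : 0 ≤ C2 := by
    refine mul_nonneg (Nat.cast_nonneg _) ?_
    refine mul_nonneg (mul_nonneg hM (by positivity)) ?_
    exact add_nonneg (by norm_num) (mul_nonneg hR (by positivity))
  have estA : ∀ p k : Pm n N, ‖p‖ ≤ R → ‖Ψ (p + k) - Ψ p‖ ≤ C1 * ‖k‖ := by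
    intro p k hp
    refine normle _ _ (mul_nonneg hC1n (norm_nonneg _)) ?_
    filter_upwards [Lp.coeFn_sub (Ψ (p + k)) (Ψ p), hΨ' (p + k), hΨ' p, aeIcc]
      with x h1 h2 h3 hx
    rw [h1, Pi.sub_apply, h2, h3]
    exact keyA hσ hb hx p k hp
  have estB : ∀ p q k : Pm n N, ‖q‖ ≤ R →
      ‖(Ψ (p + k) - Ψ p) - (Ψ (q + k) - Ψ q)‖ ≤ (C2 * ‖p - q‖) * ‖k‖ := by
    intro p q k hq
    refine normle _ _ (mul_nonneg (mul_nonneg hC2n (norm_nonneg _)) (norm_nonneg _)) ?_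
    filter_upwards [Lp.coeFn_sub (Ψ (p + k) - Ψ p) (Ψ (q + k) - Ψ q),
      Lp.coeFn_sub (Ψ (p + k)) (Ψ p), Lp.coeFn_sub (Ψ (q + k)) (Ψ q),
      hΨ' (p + k), hΨ' p, hΨ' (q + k), hΨ' q, aeIcc] with x h1 h2 h3 h4 h5 h6 h7 hx
    rw [h1, Pi.sub_apply, h2, h3, Pi.sub_apply, Pi.sub_apply, h4, h5, h6, h7]
    exact (keyB hσ hb hx p q k hq hR).trans_eq (by ring)
  refine ⟨C1 + 1, C2 + 1, by linarith, by linarith, ?_⟩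
  intro p hp q hq
  constructor
  · have h := opnorm_le_of_diff_bound Ψ (DΨ p) p (hD p) C1 hC1n
      (fun k => estA p k (hmem p hp))
    linarith
  · have h := opnorm_sub_le_of_diff_bound Ψ (DΨ p) (DΨ q) p q (hD p) (hD q)
      (C2 * ‖p - q‖) (mul_nonneg hC2n (norm_nonneg _)) (fun k => estB p q k (hmem q hq))
    nlinarith [norm_nonneg (p - q)]
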